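/- If μ is a type-preserving boundary strategy of Min, χ is a type-preserving boundary strategy of Max, and n ∈ ℕ, then the function assigning to each configuration q of the closed region graph the total time elapsed in the first n transitions of the run from q under (μ,χ) is regionally simple. -/

import Mathlib

noncomputable section

attribute [local instance] Classical.propDecidable

/-- A two-player (Min/Max) game arena with real-valued step costs. -/
structure Arena (Conf Move : Type) where
  Tr : Conf → Move → Conf → Prop
  cost : Conf → Move → ℝ
  IsMin : Conf → Prop

namespace Arena

variable {Conf Move : Type}

/-- A finite run in the arena. -/
structure FinRun (G : Arena Conf Move) where
  n : ℕ
  q : Fin (n + 1) → Conf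
  m : Fin n → Move
  valid : ∀ i : Fin n, G.Tr (q i.castSucc) (m i) (q i.succ)

/-- The last configuration of a finite run. -/
def FinRun.last {G : Arena Conf Move} (r : G.FinRun) : Conf := r.q (Fin.last r.n)

/-- The first configuration of a finite run. -/
def FinRun.first {G : Arena Conf Move} (r : G.FinRun) : Conf := r.q 0

/-- The trivial run consisting of a single configuration. -/
def single (G : Arena Conf Move) (q0 : Conf) : G.FinRun :=
  ⟨0, fun _ => q0, Fin.elim0, fun i => i.elim0⟩

/-- Extending a finite run by one transition. -/
def FinRun.extend {G : Arena Conf Move} (r : G.FinRun) (mv : Move) (q' : Conf)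
    (h : G.Tr r.last mv q') : G.FinRun where
  n := r.n + 1
  q := Fin.snoc r.q q'
  m := Fin.snoc r.m mv
  valid := by
    intro i
    induction i using Fin.lastCases with
    | last =>
        simpa [FinRun.last, Fin.snoc_castSucc, Fin.succ_last, Fin.snoc_last] using h
    | cast j =>
        rw [Fin.snoc_castSucc, Fin.snoc_castSucc, Fin.succ_castSucc, Fin.snoc_castSucc]
        exact r.valid j

/-- Strategies of player Min: mappings from finite runs to moves that are
available whenever the last configuration belongs to Min. -/
def MinStrategy (G : Arena Conf Move) : Type :=
  {σ : G.FinRun → Move // ∀ r : G.FinRun, G.IsMin r.last → ∃ q', G.Tr r.last (σ r) q'}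

/-- Strategies of player Max. -/
def MaxStrategy (G : Arena Conf Move) : Type :=
  {σ : G.FinRun → Move // ∀ r : G.FinRun, ¬ G.IsMin r.last → ∃ q', G.Tr r.last (σ r) q'}

/-- A strategy is positional if its choice depends only on the last configuration. -/
def Positional {G : Arena Conf Move} (σ : G.FinRun → Move) : Prop :=
  ∀ r r' : G.FinRun, r.last = r'.last → σ r = σ r'

/-- The finite prefixes of the unique play from `q0` in which Min uses `μ`
and Max uses `χ`. -/
def play (G : Arena Conf Move) (μ : G.MinStrategy) (χ : G.MaxStrategy) (q0 : Conf) :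
    ℕ → G.FinRun
  | 0 => G.single q0
  | n + 1 =>
    let r := G.play μ χ q0 n
    if h : G.IsMin r.last then
      r.extend (μ.1 r) (Classical.choose (μ.2 r h)) (Classical.choose_spec (μ.2 r h))
    else
      r.extend (χ.1 r) (Classical.choose (χ.2 r h)) (Classical.choose_spec (χ.2 r h))

/-- Total cost (e.g. total time) of a finite run. -/
def FinRun.time {G : Arena Conf Move} (r : G.FinRun) : ℝ :=
  ∑ i : Fin r.n, G.cost (r.q i.castSucc) (r.m i)

/-- Payoff of player Min (to be minimised): limsup of average cost. -/
def AMin (G : Arena Conf Move) (q0 : Conf) (μ : G.MinStrategy) (χ : G.MaxStrategy) : ℝ :=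
  Filter.limsup (fun n : ℕ => (G.play μ χ q0 n).time / n) Filter.atTop

/-- Payoff of player Max (to be maximised): liminf of average cost. -/
def AMax (G : Arena Conf Move) (q0 : Conf) (μ : G.MinStrategy) (χ : G.MaxStrategy) : ℝ :=
  Filter.liminf (fun n : ℕ => (G.play μ χ q0 n).time / n) Filter.atTop

/-- Upper value of the game at `q0`. -/
def upperVal (G : Arena Conf Move) (q0 : Conf) : ℝ :=
  ⨅ μ : G.MinStrategy, ⨆ χ : G.MaxStrategy, G.AMin q0 μ χ

/-- Lower value of the game at `q0`. -/
def lowerVal (G : Arena Conf Move) (q0 : Conf) : ℝ :=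
  ⨆ χ : G.MaxStrategy, ⨅ μ : G.MinStrategy, G.AMax q0 μ χ

/-- The value of the game at `q0` (meaningful when the game is determined). -/
def val (G : Arena Conf Move) (q0 : Conf) : ℝ := G.upperVal q0

end Arena
/-- `k`-bounded clock valuations. -/
def IsVal (k : ℕ) {C : Type} (ν : C → ℝ) : Prop := ∀ c, 0 ≤ ν c ∧ ν c ≤ (k : ℝ)

/-- Two clock valuations satisfy exactly the same simple clock constraints
`c ⋈ i` and `c − c' ⋈ i` with `i ∈ {0,…,k}` and `⋈ ∈ {<,=,>}` (hence also ≤, ≥). -/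
def RegEq (k : ℕ) {C : Type} (ν ν' : C → ℝ) : Prop :=
  ∀ i : ℕ, i ≤ k → ∀ c c' : C,
    ((ν c < (i : ℝ) ↔ ν' c < (i : ℝ)) ∧ (ν c = (i : ℝ) ↔ ν' c = (i : ℝ)) ∧
      ((i : ℝ) < ν c ↔ (i : ℝ) < ν' c)) ∧
    ((ν c - ν c' < (i : ℝ) ↔ ν' c - ν' c' < (i : ℝ)) ∧
      (ν c - ν c' = (i : ℝ) ↔ ν' c - ν' c' = (i : ℝ)) ∧
      ((i : ℝ) < ν c - ν c' ↔ (i : ℝ) < ν' c - ν' c'))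

/-- An average-time game on a (bounded) timed automaton: a timed automaton
together with a partition of locations between players Min and Max. -/
structure TimedGame where
  L : Type
  C : Type
  A : Type
  finL : Finite L
  finC : Finite C
  finA : Finite A
  k : ℕ
  S : Set (L × (C → ℝ))
  En : A → Set (L × (C → ℝ))
  δ : L → A → L
  ϱ : A → Set C
  LMin : Set L
  bounded : ∀ s ∈ S, IsVal k s.2
  S_zone : (∀ (ℓ : L) (ν ν' : C → ℝ), RegEq k ν ν' → ((ℓ, ν) ∈ S ↔ (ℓ, ν') ∈ S)) ∧
    ∀ ℓ : L, Convex ℝ {ν : C → ℝ | (ℓ, ν) ∈ S}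
  En_sub : ∀ a, En a ⊆ S
  En_zone : ∀ a : A,
    (∀ (ℓ : L) (ν ν' : C → ℝ), RegEq k ν ν' → ((ℓ, ν) ∈ En a ↔ (ℓ, ν') ∈ En a)) ∧
    ∀ ℓ : L, Convex ℝ {ν : C → ℝ | (ℓ, ν) ∈ En a}
  nonstuck : ∀ s ∈ S, ∃ (t : ℝ) (a : A), 0 ≤ t ∧
    (∀ t', 0 ≤ t' → t' ≤ t → (s.1, fun c => s.2 c + t') ∈ S) ∧
    ((s.1, fun c => s.2 c + t) ∈ En a) ∧
    ((δ s.1 a, fun c => if c ∈ ϱ a then 0 else s.2 c + t) ∈ S)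

namespace TimedGame

/-- Configurations of the timed automaton. -/
abbrev Q (T : TimedGame) : Type := T.L × (T.C → ℝ)

/-- Resetting the clocks in `X` to zero. -/
def resetv (T : TimedGame) (ν : T.C → ℝ) (X : Set T.C) : T.C → ℝ :=
  fun c => if c ∈ X then 0 else ν c

/-- The successor configuration after the timed action `τ = (t, a)`. -/
def tsucc (T : TimedGame) (s : T.Q) (τ : ℝ × T.A) : T.Q :=
  (T.δ s.1 τ.2, T.resetv (fun c => s.2 c + τ.1) (T.ϱ τ.2))

/-- The transition relation `s →_τ s'` of the timed automaton. -/
def Trans (T : TimedGame) (s : T.Q) (τ : ℝ × T.A) (s' : T.Q) : Prop :=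
  0 ≤ τ.1 ∧ (∀ t', 0 ≤ t' → t' ≤ τ.1 → (s.1, fun c => s.2 c + t') ∈ T.S) ∧
  ((s.1, fun c => s.2 c + τ.1) ∈ T.En τ.2) ∧ s' = T.tsucc s τ ∧ s' ∈ T.S

/-- The game arena of the average-time game played on the timed automaton. -/
def taArena (T : TimedGame) : Arena {s : T.Q // s ∈ T.S} (ℝ × T.A) where
  Tr := fun s τ s' => T.Trans s.1 τ s'.1
  cost := fun _ τ => τ.1
  IsMin := fun s => s.1.1 ∈ T.LMin

/-- A clock region: an equivalence class of the region equivalence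
(restricted to `k`-bounded valuations). -/
def IsClockRegion (T : TimedGame) (P : Set (T.C → ℝ)) : Prop :=
  ∃ ν : T.C → ℝ, P = {ν' | IsVal T.k ν' ∧ RegEq T.k ν ν'}

/-- Regions: pairs of a location and a clock region. -/
def Region (T : TimedGame) : Type :=
  T.L × {P : Set (T.C → ℝ) // T.IsClockRegion P}

/-- The clock region of a valuation. -/
def clockRegionOf (T : TimedGame) (ν : T.C → ℝ) : {P : Set (T.C → ℝ) // T.IsClockRegion P} :=
  ⟨{ν' | IsVal T.k ν' ∧ RegEq T.k ν ν'}, ⟨ν, rfl⟩⟩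

/-- The region `[s]` of a configuration `s`. -/
def regionOf (T : TimedGame) (s : T.Q) : T.Region := (s.1, T.clockRegionOf s.2)

/-- The configurations `Ω` of the region graphs: pairs of a configuration
of the timed automaton and a region. -/
abbrev Omega (T : TimedGame) : Type := T.Q × T.Region

/-- `(s, (ℓ, P))` is a state of the closed region graph: the locations match
and `s`'s valuation lies in the closure of the clock region `P`. -/
def barS (T : TimedGame) (q : T.Omega) : Prop :=
  q.1.1 = q.2.1 ∧ q.1.2 ∈ closure q.2.2.1

/-- `(s, (ℓ, P))` is a state of the region graph: the locations match and
`s`'s valuation lies in the clock region `P`. -/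
def tildeS (T : TimedGame) (q : T.Omega) : Prop :=
  q.1.1 = q.2.1 ∧ q.1.2 ∈ q.2.2.1

/-- `R →_* R'` : the region `R'` is a time successor of `R`. -/
def timeSucc (T : TimedGame) (R R' : T.Region) : Prop :=
  R.1 = R'.1 ∧ ∀ ν ∈ R.2.1, ∃ t : ℝ, 0 ≤ t ∧
    (∀ t', 0 ≤ t' → t' ≤ t → (R.1, fun c => ν c + t') ∈ T.S) ∧
    (fun c => ν c + t) ∈ R'.2.1

/-- The discrete transition `s →^a s'` of the timed automaton. -/
def astep (T : TimedGame) (s : T.Q) (a : T.A) (s' : T.Q) : Prop :=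
  s ∈ T.S ∧ s' ∈ T.S ∧ s ∈ T.En a ∧ s' = (T.δ s.1 a, T.resetv s.2 (T.ϱ a))

/-- `R →^a R'` at the level of regions. -/
def regAct (T : TimedGame) (R : T.Region) (a : T.A) (R' : T.Region) : Prop :=
  ∃ ν ∈ R.2.1, ∃ ν' ∈ R'.2.1, T.astep (R.1, ν) a (R'.1, ν')

/-- Moves of the region graphs: a delay, an intermediate region, and an action. -/
abbrev RMove (T : TimedGame) : Type := ℝ × T.Region × T.A

/-- Transitions underlying pre-runs: `(s', R') = succ((s,R), (t,R'',a))` with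
`R →_* R'' →^a R'`. -/
def preTrans (T : TimedGame) (q : T.Omega) (m : T.RMove) (q' : T.Omega) : Prop :=
  0 ≤ m.1 ∧ T.timeSucc q.2 m.2.1 ∧ T.regAct m.2.1 m.2.2 q'.2 ∧
  q'.1 = T.tsucc q.1 (m.1, m.2.2)

/-- Labelled transitions of the closed region graph `T̄`. -/
def cTrans (T : TimedGame) (q : T.Omega) (m : T.RMove) (q' : T.Omega) : Prop :=
  T.preTrans q m q' ∧ T.barS q ∧ T.barS q' ∧
  (fun c => q.1.2 c + m.1) ∈ closure m.2.1.2.1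

/-- Labelled transitions of the boundary region graph `T̂`: additionally the
intermediate valuation lies on the boundary of the intermediate region. -/
def bTrans (T : TimedGame) (q : T.Omega) (m : T.RMove) (q' : T.Omega) : Prop :=
  T.cTrans q m q' ∧ (fun c => q.1.2 c + m.1) ∈ frontier m.2.1.2.1

/-- Labelled transitions of the region graph `T̃`. -/
def rTrans (T : TimedGame) (q : T.Omega) (m : T.RMove) (q' : T.Omega) : Prop :=
  T.preTrans q m q' ∧ T.tildeS q ∧ T.tildeS q' ∧
  (fun c => q.1.2 c + m.1) ∈ m.2.1.2.1

/-- The arena of pre-runs over `Ω`. -/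
def preArena (T : TimedGame) : Arena T.Omega T.RMove where
  Tr := T.preTrans
  cost := fun _ m => m.1
  IsMin := fun q => q.2.1 ∈ T.LMin

/-- Finite pre-runs. -/
abbrev PreRunF (T : TimedGame) : Type := (T.preArena).FinRun

/-- Pre-strategies of Min. -/
abbrev MinPre (T : TimedGame) : Type := (T.preArena).MinStrategy

/-- Pre-strategies of Max. -/
abbrev MaxPre (T : TimedGame) : Type := (T.preArena).MaxStrategy

/-- A pre-strategy of Min is a strategy in the closed region graph `T̄`
if it always waits into the closure of the chosen intermediate region. -/
def MinClosed (T : TimedGame) (μ : T.MinPre) : Prop :=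
  ∀ r : T.PreRunF,
    (fun c => (Arena.FinRun.last r).1.2 c + (μ.1 r).1) ∈ closure (μ.1 r).2.1.2.1

def MaxClosed (T : TimedGame) (χ : T.MaxPre) : Prop :=
  ∀ r : T.PreRunF,
    (fun c => (Arena.FinRun.last r).1.2 c + (χ.1 r).1) ∈ closure (χ.1 r).2.1.2.1

/-- Admissible strategies: strategies in the region graph `T̃`. -/
def MinAdmissible (T : TimedGame) (μ : T.MinPre) : Prop :=
  ∀ r : T.PreRunF,
    (fun c => (Arena.FinRun.last r).1.2 c + (μ.1 r).1) ∈ (μ.1 r).2.1.2.1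

def MaxAdmissible (T : TimedGame) (χ : T.MaxPre) : Prop :=
  ∀ r : T.PreRunF,
    (fun c => (Arena.FinRun.last r).1.2 c + (χ.1 r).1) ∈ (χ.1 r).2.1.2.1

/-- Boundary strategies of Min: the delay is the **infimum** of the delays
reaching the closure of the chosen intermediate region. -/
def MinBoundary (T : TimedGame) (μ : T.MinPre) : Prop :=
  ∀ r : T.PreRunF,
    (μ.1 r).1 = sInf {t : ℝ | 0 ≤ t ∧
      (fun c => (Arena.FinRun.last r).1.2 c + t) ∈ closure (μ.1 r).2.1.2.1}

/-- Boundary strategies of Max: the delay is the **supremum** of the delays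
reaching the closure of the chosen intermediate region. -/
def MaxBoundary (T : TimedGame) (χ : T.MaxPre) : Prop :=
  ∀ r : T.PreRunF,
    (χ.1 r).1 = sSup {t : ℝ | 0 ≤ t ∧
      (fun c => (Arena.FinRun.last r).1.2 c + t) ∈ closure (χ.1 r).2.1.2.1}

/-- The sequence of regions visited by a finite pre-run (its type, part 1). -/
def typeConfs (T : TimedGame) (r : T.PreRunF) : ℕ → Option T.Region :=
  fun i => if h : i < r.n + 1 then some ((r.q ⟨i, h⟩).2) else none

/-- The sequence of intermediate regions and actions of a finite pre-run
(its type, part 2). -/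
def typeMoves (T : TimedGame) (r : T.PreRunF) : ℕ → Option (T.Region × T.A) :=
  fun i => if h : i < r.n then some ((r.m ⟨i, h⟩).2) else none

/-- Two finite pre-runs have the same type. -/
def sameType (T : TimedGame) (r r' : T.PreRunF) : Prop :=
  T.typeConfs r = T.typeConfs r' ∧ T.typeMoves r = T.typeMoves r'

/-- The waiting time `t(s, α)` of the boundary timed action `α = (b, c, a)`. -/
def tOf (T : TimedGame) (s : T.Q) (α : ℕ × T.C × T.A) : ℝ :=
  if s.2 α.2.1 ≤ (α.1 : ℝ) then (α.1 : ℝ) - s.2 α.2.1 else 0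

/-- Type-preserving boundary strategies of Min: runs of the same type are
assigned the same intermediate region, action and boundary timed action. -/
def MinTP (T : TimedGame) (μ : T.MinPre) : Prop :=
  T.MinBoundary μ ∧
  ∀ r r' : T.PreRunF, T.sameType r r' →
    (μ.1 r).2 = (μ.1 r').2 ∧
    ∃ (b : ℕ) (c : T.C), b ≤ T.k ∧
      (μ.1 r).1 = T.tOf (Arena.FinRun.last r).1 (b, c, (μ.1 r).2.2) ∧
      (μ.1 r').1 = T.tOf (Arena.FinRun.last r').1 (b, c, (μ.1 r').2.2)

def MaxTP (T : TimedGame) (χ : T.MaxPre) : Prop :=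
  T.MaxBoundary χ ∧
  ∀ r r' : T.PreRunF, T.sameType r r' →
    (χ.1 r).2 = (χ.1 r').2 ∧
    ∃ (b : ℕ) (c : T.C), b ≤ T.k ∧
      (χ.1 r).1 = T.tOf (Arena.FinRun.last r).1 (b, c, (χ.1 r).2.2) ∧
      (χ.1 r').1 = T.tOf (Arena.FinRun.last r').1 (b, c, (χ.1 r').2.2)

/-- `μ_ε` is `ε`-close to the type-preserving boundary strategy `μ` of Min. -/
def EpsCloseMin (T : TimedGame) (μ με : T.MinPre) (ε : ℝ) : Prop :=
  ∀ r : T.PreRunF, (με.1 r).2 = (μ.1 r).2 ∧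
    (fun c => (Arena.FinRun.last r).1.2 c + (με.1 r).1) ∈ (μ.1 r).2.1.2.1 ∧
    (με.1 r).1 ≤ (μ.1 r).1 + ε

/-- `χ_ε` is `ε`-close to the type-preserving boundary strategy `χ` of Max. -/
def EpsCloseMax (T : TimedGame) (χ χε : T.MaxPre) (ε : ℝ) : Prop :=
  ∀ r : T.PreRunF, (χε.1 r).2 = (χ.1 r).2 ∧
    (fun c => (Arena.FinRun.last r).1.2 c + (χε.1 r).1) ∈ (χ.1 r).2.1.2.1 ∧
    (χ.1 r).1 - ε ≤ (χε.1 r).1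

/-- Upper value of the game on the subgraph of region graphs whose strategies
are the pre-strategies satisfying `PMin`, `PMax` respectively. -/
def upperG (T : TimedGame) (PMin : T.MinPre → Prop) (PMax : T.MaxPre → Prop)
    (q : T.Omega) : ℝ :=
  ⨅ μ : {μ : T.MinPre // PMin μ}, ⨆ χ : {χ : T.MaxPre // PMax χ},
    Arena.AMin T.preArena q μ.1 χ.1

/-- Lower value. -/
def lowerG (T : TimedGame) (PMin : T.MinPre → Prop) (PMax : T.MaxPre → Prop)
    (q : T.Omega) : ℝ :=
  ⨆ χ : {χ : T.MaxPre // PMax χ}, ⨅ μ : {μ : T.MinPre // PMin μ},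
    Arena.AMax T.preArena q μ.1 χ.1

def upperBar (T : TimedGame) : T.Omega → ℝ := T.upperG T.MinClosed T.MaxClosed
def lowerBar (T : TimedGame) : T.Omega → ℝ := T.lowerG T.MinClosed T.MaxClosed
/-- The value of the average-time game on the closed region graph `T̄`. -/
def valBar (T : TimedGame) : T.Omega → ℝ := T.upperBar

def upperHat (T : TimedGame) : T.Omega → ℝ := T.upperG T.MinBoundary T.MaxBoundary
def lowerHat (T : TimedGame) : T.Omega → ℝ := T.lowerG T.MinBoundary T.MaxBoundary
/-- The value of the average-time game on the boundary region graph `T̂`. -/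
def valHat (T : TimedGame) : T.Omega → ℝ := T.upperHat

def upperTilde (T : TimedGame) : T.Omega → ℝ := T.upperG T.MinAdmissible T.MaxAdmissible
def lowerTilde (T : TimedGame) : T.Omega → ℝ := T.lowerG T.MinAdmissible T.MaxAdmissible
/-- The value of the average-time game on the region graph `T̃`. -/
def valTilde (T : TimedGame) : T.Omega → ℝ := T.upperTilde

/-- A function is simple on a set `X` of configurations. -/
def SimpleOn (T : TimedGame) (X : Set T.Omega) (F : T.Omega → ℝ) : Prop :=
  (∃ e : ℤ, ∀ q ∈ X, F q = (e : ℝ)) ∨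
  (∃ (e : ℤ) (c : T.C), ∀ q ∈ X, F q = (e : ℝ) - q.1.2 c)

/-- A function on the configurations of the closed region graph is regionally
simple. -/
def RegionallySimple (T : TimedGame) (F : T.Omega → ℝ) : Prop :=
  ∀ R : T.Region, T.SimpleOn {q : T.Omega | T.barS q ∧ q.2 = R} F

/-- A function on the configurations of the closed region graph is regionally
constant. -/
def RegionallyConstant (T : TimedGame) (F : T.Omega → ℝ) : Prop :=
  ∀ R : T.Region, ∃ v : ℝ, ∀ q : T.Omega, T.barS q → q.2 = R → F q = v

/-- The configuration `(s, [s])` of the region graphs determined by a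
configuration `s` of the timed automaton. -/
def confOf (T : TimedGame) (s : T.Q) : T.Omega := (s, T.regionOf s)

/-- A region is thin if some clock has an integer value throughout its closure. -/
def Thin (T : TimedGame) (R : T.Region) : Prop :=
  ∃ c : T.C, ∀ ν ∈ closure R.2.1, ∃ m : ℤ, ν c = (m : ℝ)

/-- `R'` is the immediate time successor of `R`. -/
def ImmTimeSucc (T : TimedGame) (R R' : T.Region) : Prop :=
  R.1 = R'.1 ∧ ∀ ν ∈ R.2.1, ∃ ε : ℝ, 0 < ε ∧
    ∀ t : ℝ, 0 < t → t < ε → (fun c => ν c + t) ∈ R'.2.1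

end TimedGame


section AuxProof

/-- Evaluation of an optional clock: `none` evaluates to `0`. -/
def ovv {C : Type} (ν : C → ℝ) : Option C → ℝ
  | none => 0
  | some c => ν c

theorem RegEq.refl' (k : ℕ) {C : Type} (ν : C → ℝ) : RegEq k ν ν :=
  fun _ _ _ _ => ⟨⟨Iff.rfl, Iff.rfl, Iff.rfl⟩, Iff.rfl, Iff.rfl, Iff.rfl⟩

theorem RegEq.symm' {k : ℕ} {C : Type} {ν ν' : C → ℝ} (h : RegEq k ν ν') : RegEq k ν' ν := by
  intro i hi c c'
  obtain ⟨⟨a1, a2, a3⟩, b1, b2, b3⟩ := h i hi c c'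
  exact ⟨⟨a1.symm, a2.symm, a3.symm⟩, b1.symm, b2.symm, b3.symm⟩

theorem RegEq.trans' {k : ℕ} {C : Type} {ν ν' ν'' : C → ℝ}
    (h : RegEq k ν ν') (h' : RegEq k ν' ν'') : RegEq k ν ν'' := by
  intro i hi c c'
  obtain ⟨⟨a1, a2, a3⟩, b1, b2, b3⟩ := h i hi c c'
  obtain ⟨⟨a1', a2', a3'⟩, b1', b2', b3'⟩ := h' i hi c c'
  exact ⟨⟨a1.trans a1', a2.trans a2', a3.trans a3'⟩, b1.trans b1', b2.trans b2', b3.trans b3'⟩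

theorem regeq_cmp_val {k : ℕ} {C : Type} {ν ρ : C → ℝ} (h : RegEq k ν ρ)
    (h0 : IsVal k ν) (h1 : IsVal k ρ) (m : ℤ) (x : C) :
    (ν x < (m : ℝ) ↔ ρ x < (m : ℝ)) ∧ (ν x = (m : ℝ) ↔ ρ x = (m : ℝ)) ∧
      ((m : ℝ) < ν x ↔ (m : ℝ) < ρ x) := by
  by_cases hm0 : 0 ≤ m
  · by_cases hmk : m ≤ (k : ℤ)
    · have hcast : ((m.toNat : ℕ) : ℝ) = (m : ℝ) := by
        exact_mod_cast congrArg (Int.cast : ℤ → ℝ) (Int.toNat_of_nonneg hm0)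
      have := (h m.toNat (by omega) x x).1
      rw [hcast] at this
      exact this
    · have hkm : (k : ℝ) < (m : ℝ) := by exact_mod_cast lt_of_not_ge hmk
      refine ⟨iff_of_true ?_ ?_, iff_of_false ?_ ?_, iff_of_false ?_ ?_⟩ <;>
        [ exact lt_of_le_of_lt (h0 x).2 hkm; exact lt_of_le_of_lt (h1 x).2 hkm;
          exact ne_of_lt (lt_of_le_of_lt (h0 x).2 hkm);
          exact ne_of_lt (lt_of_le_of_lt (h1 x).2 hkm);
          exact not_lt.2 (le_of_lt (lt_of_le_of_lt (h0 x).2 hkm));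
          exact not_lt.2 (le_of_lt (lt_of_le_of_lt (h1 x).2 hkm)) ]
  · have hm : (m : ℝ) < 0 := by exact_mod_cast lt_of_not_ge hm0
    refine ⟨iff_of_false ?_ ?_, iff_of_false ?_ ?_, iff_of_true ?_ ?_⟩ <;>
      [ exact not_lt.2 (le_of_lt (lt_of_lt_of_le hm (h0 x).1));
        exact not_lt.2 (le_of_lt (lt_of_lt_of_le hm (h1 x).1));
        exact fun he => absurd he (ne_of_gt (lt_of_lt_of_le hm (h0 x).1));
        exact fun he => absurd he (ne_of_gt (lt_of_lt_of_le hm (h1 x).1));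
        exact lt_of_lt_of_le hm (h0 x).1;
        exact lt_of_lt_of_le hm (h1 x).1 ]

theorem regeq_cmp_diff {k : ℕ} {C : Type} {ν ρ : C → ℝ} (h : RegEq k ν ρ)
    (h0 : IsVal k ν) (h1 : IsVal k ρ) (m : ℤ) (x y : C) :
    (ν x - ν y < (m : ℝ) ↔ ρ x - ρ y < (m : ℝ)) ∧
      (ν x - ν y = (m : ℝ) ↔ ρ x - ρ y = (m : ℝ)) ∧
      ((m : ℝ) < ν x - ν y ↔ (m : ℝ) < ρ x - ρ y) := by
  have hb : ∀ (τ : C → ℝ), IsVal k τ → -(k : ℝ) ≤ τ x - τ y ∧ τ x - τ y ≤ (k : ℝ) := by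
    intro τ hτ
    constructor <;> [linarith [(hτ x).1, (hτ y).2]; linarith [(hτ x).2, (hτ y).1]]
  by_cases hm0 : 0 ≤ m
  · by_cases hmk : m ≤ (k : ℤ)
    · have hcast : ((m.toNat : ℕ) : ℝ) = (m : ℝ) := by
        exact_mod_cast congrArg (Int.cast : ℤ → ℝ) (Int.toNat_of_nonneg hm0)
      have := (h m.toNat (by omega) x y).2
      rw [hcast] at this
      exact this
    · have hkm : (k : ℝ) < (m : ℝ) := by exact_mod_cast lt_of_not_ge hmk
      refine ⟨iff_of_true ?_ ?_, iff_of_false ?_ ?_, iff_of_false ?_ ?_⟩ <;>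
        [ exact lt_of_le_of_lt (hb ν h0).2 hkm; exact lt_of_le_of_lt (hb ρ h1).2 hkm;
          exact ne_of_lt (lt_of_le_of_lt (hb ν h0).2 hkm);
          exact ne_of_lt (lt_of_le_of_lt (hb ρ h1).2 hkm);
          exact not_lt.2 (le_of_lt (lt_of_le_of_lt (hb ν h0).2 hkm));
          exact not_lt.2 (le_of_lt (lt_of_le_of_lt (hb ρ h1).2 hkm)) ]
  · by_cases hmk : -m ≤ (k : ℤ)
    · have hcast : (((-m).toNat : ℕ) : ℝ) = -(m : ℝ) := by
        have : ((-m).toNat : ℤ) = -m := Int.toNat_of_nonneg (by omega)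
        exact_mod_cast congrArg (Int.cast : ℤ → ℝ) this
      have H := (h (-m).toNat (by omega) y x).2
      rw [hcast] at H
      obtain ⟨H1, H2, H3⟩ := H
      refine ⟨⟨fun hh => ?_, fun hh => ?_⟩, ⟨fun hh => ?_, fun hh => ?_⟩,
        ⟨fun hh => ?_, fun hh => ?_⟩⟩
      · have := H3.mp (by linarith); linarith
      · have := H3.mpr (by linarith); linarith
      · have := H2.mp (by linarith); linarith
      · have := H2.mpr (by linarith); linarith
      · have := H1.mp (by linarith); linarith
      · have := H1.mpr (by linarith); linarith
    · have hkm : (m : ℝ) < -(k : ℝ) := by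
        have : (m : ℤ) < -(k : ℤ) := by omega
        exact_mod_cast this
      refine ⟨iff_of_false ?_ ?_, iff_of_false ?_ ?_, iff_of_true ?_ ?_⟩ <;>
        [ exact not_lt.2 (le_of_lt (lt_of_lt_of_le hkm (hb ν h0).1));
          exact not_lt.2 (le_of_lt (lt_of_lt_of_le hkm (hb ρ h1).1));
          exact ne_of_gt (lt_of_lt_of_le hkm (hb ν h0).1);
          exact ne_of_gt (lt_of_lt_of_le hkm (hb ρ h1).1);
          exact lt_of_lt_of_le hkm (hb ν h0).1;
          exact lt_of_lt_of_le hkm (hb ρ h1).1 ]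

theorem regeq_cmp_ovv {k : ℕ} {C : Type} {ν ρ : C → ℝ} (h : RegEq k ν ρ)
    (h0 : IsVal k ν) (h1 : IsVal k ρ) (m : ℤ) (d Y : Option C) :
    (ovv ν d - ovv ν Y < (m : ℝ) ↔ ovv ρ d - ovv ρ Y < (m : ℝ)) ∧
      (ovv ν d - ovv ν Y = (m : ℝ) ↔ ovv ρ d - ovv ρ Y = (m : ℝ)) ∧
      ((m : ℝ) < ovv ν d - ovv ν Y ↔ (m : ℝ) < ovv ρ d - ovv ρ Y) := by
  cases d with
  | none =>
    cases Y with
    | none => exact ⟨Iff.rfl, Iff.rfl, Iff.rfl⟩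
    | some y =>
      have H := regeq_cmp_val h h0 h1 (-m) y
      have hc : ((-m : ℤ) : ℝ) = -(m : ℝ) := by push_cast; ring
      rw [hc] at H
      obtain ⟨H1, H2, H3⟩ := H
      simp only [ovv]
      refine ⟨⟨fun hh => ?_, fun hh => ?_⟩, ⟨fun hh => ?_, fun hh => ?_⟩,
        ⟨fun hh => ?_, fun hh => ?_⟩⟩
      · have := H3.mp (by linarith); linarith
      · have := H3.mpr (by linarith); linarith
      · have := H2.mp (by linarith); linarith
      · have := H2.mpr (by linarith); linarith
      · have := H1.mp (by linarith); linarith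
      · have := H1.mpr (by linarith); linarith
  | some x =>
    cases Y with
    | none =>
      have H := regeq_cmp_val h h0 h1 m x
      simp only [ovv, sub_zero]
      exact H
    | some y =>
      simp only [ovv]
      exact regeq_cmp_diff h h0 h1 m x y

theorem closure_cmp {k : ℕ} {C : Type} {β ν₀ ν : C → ℝ}
    (h₀ : ν₀ ∈ {ν' : C → ℝ | IsVal k ν' ∧ RegEq k β ν'})
    (hν : ν ∈ closure {ν' : C → ℝ | IsVal k ν' ∧ RegEq k β ν'})
    (m : ℤ) (d Y : Option C) :
    (ovv ν₀ d - ovv ν₀ Y < (m : ℝ) → ovv ν d - ovv ν Y ≤ (m : ℝ)) ∧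
      (ovv ν₀ d - ovv ν₀ Y = (m : ℝ) → ovv ν d - ovv ν Y = (m : ℝ)) ∧
      ((m : ℝ) < ovv ν₀ d - ovv ν₀ Y → (m : ℝ) ≤ ovv ν d - ovv ν Y) := by
  set P : Set (C → ℝ) := {ν' | IsVal k ν' ∧ RegEq k β ν'} with hP
  have key : ∀ ρ ∈ P,
      (ovv ν₀ d - ovv ν₀ Y < (m : ℝ) ↔ ovv ρ d - ovv ρ Y < (m : ℝ)) ∧
      (ovv ν₀ d - ovv ν₀ Y = (m : ℝ) ↔ ovv ρ d - ovv ρ Y = (m : ℝ)) ∧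
      ((m : ℝ) < ovv ν₀ d - ovv ν₀ Y ↔ (m : ℝ) < ovv ρ d - ovv ρ Y) := by
    intro ρ hρ
    exact regeq_cmp_ovv (RegEq.trans' (RegEq.symm' h₀.2) hρ.2) h₀.1 hρ.1 m d Y
  have hcont : Continuous fun ρ : C → ℝ => ovv ρ d - ovv ρ Y := by
    have : ∀ Z : Option C, Continuous fun ρ : C → ℝ => ovv ρ Z := by
      intro Z
      cases Z with
      | none => exact continuous_const
      | some z => exact continuous_apply z
    exact (this d).sub (this Y)
  refine ⟨fun hlt => ?_, fun heq => ?_, fun hgt => ?_⟩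
  · have hsub : P ⊆ {ρ : C → ℝ | ovv ρ d - ovv ρ Y ≤ (m : ℝ)} := fun ρ hρ =>
      le_of_lt ((key ρ hρ).1.mp hlt)
    exact closure_minimal hsub (isClosed_le hcont continuous_const) hν
  · have hsub : P ⊆ {ρ : C → ℝ | ovv ρ d - ovv ρ Y = (m : ℝ)} := fun ρ hρ =>
      (key ρ hρ).2.1.mp heq
    exact closure_minimal hsub (isClosed_eq hcont continuous_const) hν
  · have hsub : P ⊆ {ρ : C → ℝ | (m : ℝ) ≤ ovv ρ d - ovv ρ Y} := fun ρ hρ =>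
      le_of_lt ((key ρ hρ).2.2.mp hgt)
    exact closure_minimal hsub (isClosed_le continuous_const hcont) hν

end AuxProof

section AuxProof2

open TimedGame

theorem regeq_resetv (T : TimedGame) {ν ρ : T.C → ℝ} (hn : IsVal T.k ν) (hr : IsVal T.k ρ)
    (h : RegEq T.k ν ρ) (X : Set T.C) : RegEq T.k (T.resetv ν X) (T.resetv ρ X) := by
  intro i hi c c'
  have H := h i hi c c'
  have hnn : (0 : ℝ) ≤ (i : ℝ) := by positivity
  by_cases hc : c ∈ X <;> by_cases hc' : c' ∈ X <;>
    simp only [TimedGame.resetv, hc, hc', if_true, if_false, ite_true, ite_false]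
  · -- both reset
    simp
  · -- c reset, c' not
    have k3 := (h 0 (Nat.zero_le _) c' c').1
    simp only [Nat.cast_zero] at k3
    refine ⟨by simp, ?_, ?_, ?_⟩
    · rcases Nat.eq_zero_or_pos i with hz | hp
      · subst hz
        simp only [Nat.cast_zero]
        constructor <;> intro hh
        · have h1 : 0 < ν c' := by linarith
          have h2 : 0 < ρ c' := k3.2.2.mp h1
          linarith
        · have h1 : 0 < ρ c' := by linarith
          have h2 : 0 < ν c' := k3.2.2.mpr h1
          linarith
      · have hip : (0 : ℝ) < (i : ℝ) := by exact_mod_cast hp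
        exact iff_of_true (by linarith [(hn c').1]) (by linarith [(hr c').1])
    · rcases Nat.eq_zero_or_pos i with hz | hp
      · subst hz
        simp only [Nat.cast_zero]
        constructor <;> intro hh
        · have h1 : ν c' = 0 := by linarith
          have h2 : ρ c' = 0 := k3.2.1.mp h1
          linarith
        · have h1 : ρ c' = 0 := by linarith
          have h2 : ν c' = 0 := k3.2.1.mpr h1
          linarith
      · have hip : (0 : ℝ) < (i : ℝ) := by exact_mod_cast hp
        exact iff_of_false (by intro hh; linarith [(hn c').1]) (by intro hh; linarith [(hr c').1])
    · exact iff_of_false (by intro hh; linarith [(hn c').1]) (by intro hh; linarith [(hr c').1])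
  · -- c' reset only
    refine ⟨H.1, ?_, ?_, ?_⟩
    · constructor <;> intro hh
      · have := H.1.1.mp (by linarith); linarith
      · have := H.1.1.mpr (by linarith); linarith
    · constructor <;> intro hh
      · have := H.1.2.1.mp (by linarith); linarith
      · have := H.1.2.1.mpr (by linarith); linarith
    · constructor <;> intro hh
      · have := H.1.2.2.mp (by linarith); linarith
      · have := H.1.2.2.mpr (by linarith); linarith
  · -- no resets
    exact H

theorem clockRegion_eq_of_mem {T : TimedGame}
    {P1 P2 : {P : Set (T.C → ℝ) // T.IsClockRegion P}}
    {ρ1 ρ2 : T.C → ℝ} (h1 : ρ1 ∈ P1.1) (h2 : ρ2 ∈ P2.1) (h : RegEq T.k ρ1 ρ2) :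
    P1 = P2 := by
  apply Subtype.ext
  obtain ⟨β1, e1⟩ := P1.2
  obtain ⟨β2, e2⟩ := P2.2
  rw [e1] at h1 ⊢
  rw [e2] at h2 ⊢
  ext τ
  simp only [Set.mem_setOf_eq]
  constructor
  · rintro ⟨hv, hre⟩
    exact ⟨hv, RegEq.trans' h2.2 (RegEq.trans' (RegEq.symm' h) (RegEq.trans' (RegEq.symm' h1.2) hre))⟩
  · rintro ⟨hv, hre⟩
    exact ⟨hv, RegEq.trans' h1.2 (RegEq.trans' h (RegEq.trans' (RegEq.symm' h2.2) hre))⟩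

theorem regAct_region_unique (T : TimedGame) {R'' R1 R2 : T.Region} {a : T.A}
    (h1 : T.regAct R'' a R1) (h2 : T.regAct R'' a R2) : R1 = R2 := by
  obtain ⟨ν1, hν1, ν1', hν1', hs1⟩ := h1
  obtain ⟨ν2, hν2, ν2', hν2', hs2⟩ := h2
  obtain ⟨_, _, _, he1⟩ := hs1
  obtain ⟨_, _, _, he2⟩ := hs2
  have hl1 : R1.1 = T.δ R''.1 a := congrArg Prod.fst he1
  have hl2 : R2.1 = T.δ R''.1 a := congrArg Prod.fst he2
  have hv1 : ν1' = T.resetv ν1 (T.ϱ a) := congrArg Prod.snd he1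
  have hv2 : ν2' = T.resetv ν2 (T.ϱ a) := congrArg Prod.snd he2
  obtain ⟨β, hβ⟩ := R''.2.2
  rw [hβ] at hν1 hν2
  have hre : RegEq T.k ν1 ν2 := RegEq.trans' (RegEq.symm' hν1.2) hν2.2
  have hres : RegEq T.k ν1' ν2' := by
    rw [hv1, hv2]; exact regeq_resetv T hν1.1 hν2.1 hre (T.ϱ a)
  have h2eq : R1.2 = R2.2 := clockRegion_eq_of_mem hν1' hν2' hres
  exact Prod.ext (hl1.trans hl2.symm) h2eq

end AuxProof2

section AuxProof3

open TimedGame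

theorem Arena.FinRun.last_extend {Conf Move : Type} {G : Arena Conf Move}
    (r : G.FinRun) (mv : Move) (q' : Conf) (h : G.Tr r.last mv q') :
    (r.extend mv q' h).last = q' := by
  simp only [Arena.FinRun.last, Arena.FinRun.extend, Fin.snoc_last]

theorem Arena.FinRun.n_extend {Conf Move : Type} {G : Arena Conf Move}
    (r : G.FinRun) (mv : Move) (q' : Conf) (h : G.Tr r.last mv q') :
    (r.extend mv q' h).n = r.n + 1 := rfl

theorem Arena.FinRun.time_extend {Conf Move : Type} {G : Arena Conf Move}
    (r : G.FinRun) (mv : Move) (q' : Conf) (h : G.Tr r.last mv q') :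
    (r.extend mv q' h).time = r.time + G.cost r.last mv := by
  have h1 : (r.extend mv q' h).time
      = ∑ i : Fin (r.n + 1), G.cost ((r.extend mv q' h).q i.castSucc)
          ((r.extend mv q' h).m i) := rfl
  rw [h1, Fin.sum_univ_castSucc]
  congr 1
  · apply Finset.sum_congr rfl
    intro i _
    show G.cost ((Fin.snoc r.q q' : Fin (r.n + 1 + 1) → Conf) i.castSucc.castSucc)
        ((Fin.snoc r.m mv : Fin (r.n + 1) → Move) i.castSucc) = _
    rw [Fin.snoc_castSucc, Fin.snoc_castSucc]
  · show G.cost ((Fin.snoc r.q q' : Fin (r.n + 1 + 1) → Conf) (Fin.last r.n).castSucc)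
        ((Fin.snoc r.m mv : Fin (r.n + 1) → Move) (Fin.last r.n)) = _
    rw [Fin.snoc_castSucc, Fin.snoc_last]
    rfl

theorem Arena.play_zero {Conf Move : Type} (G : Arena Conf Move)
    (μ : G.MinStrategy) (χ : G.MaxStrategy) (q0 : Conf) :
    G.play μ χ q0 0 = G.single q0 := rfl

theorem Arena.play_succ {Conf Move : Type} (G : Arena Conf Move)
    (μ : G.MinStrategy) (χ : G.MaxStrategy) (q0 : Conf) (n : ℕ) :
    G.play μ χ q0 (n + 1) =
      (if h : G.IsMin (G.play μ χ q0 n).last then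
        (G.play μ χ q0 n).extend (μ.1 (G.play μ χ q0 n))
          (Classical.choose (μ.2 (G.play μ χ q0 n) h))
          (Classical.choose_spec (μ.2 (G.play μ χ q0 n) h))
      else
        (G.play μ χ q0 n).extend (χ.1 (G.play μ χ q0 n))
          (Classical.choose (χ.2 (G.play μ χ q0 n) h))
          (Classical.choose_spec (χ.2 (G.play μ χ q0 n) h))) := rfl

theorem Arena.play_n {Conf Move : Type} (G : Arena Conf Move)
    (μ : G.MinStrategy) (χ : G.MaxStrategy) (q0 : Conf) (n : ℕ) :
    (G.play μ χ q0 n).n = n := by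
  induction n with
  | zero => rfl
  | succ n ih =>
    rw [Arena.play_succ]
    split <;> rw [Arena.FinRun.n_extend, ih]

theorem TimedGame.typeConfs_extend (T : TimedGame) (r : T.PreRunF) (mv : T.RMove)
    (q' : T.Omega) (h : (T.preArena).Tr r.last mv q') (j : ℕ) :
    T.typeConfs (r.extend mv q' h) j =
      if hj : j < r.n + 1 then T.typeConfs r j
      else if j = r.n + 1 then some q'.2 else none := by
  by_cases h1 : j < r.n + 1
  · rw [dif_pos h1]
    unfold TimedGame.typeConfs
    rw [dif_pos (show j < (r.extend mv q' h).n + 1 by rw [Arena.FinRun.n_extend]; omega), dif_pos h1]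
    congr 1
    show ((Fin.snoc r.q q' : Fin (r.n + 2) → T.Omega) ⟨j, by omega⟩).2 = _
    have he : (⟨j, by omega⟩ : Fin (r.n + 2)) = (⟨j, h1⟩ : Fin (r.n + 1)).castSucc := rfl
    rw [he, Fin.snoc_castSucc]
  · rw [dif_neg h1]
    by_cases h2 : j = r.n + 1
    · subst h2
      rw [if_pos rfl]
      unfold TimedGame.typeConfs
      rw [dif_pos (show r.n + 1 < (r.extend mv q' h).n + 1 by rw [Arena.FinRun.n_extend]; omega)]
      congr 1
      show ((Fin.snoc r.q q' : Fin (r.n + 2) → T.Omega) ⟨r.n + 1, by omega⟩).2 = _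
      have he : (⟨r.n + 1, by omega⟩ : Fin (r.n + 2)) = Fin.last (r.n + 1) := rfl
      rw [he, Fin.snoc_last]
    · rw [if_neg h2]
      unfold TimedGame.typeConfs
      rw [dif_neg (show ¬ j < (r.extend mv q' h).n + 1 by rw [Arena.FinRun.n_extend]; omega)]

theorem TimedGame.typeMoves_extend (T : TimedGame) (r : T.PreRunF) (mv : T.RMove)
    (q' : T.Omega) (h : (T.preArena).Tr r.last mv q') (j : ℕ) :
    T.typeMoves (r.extend mv q' h) j =
      if hj : j < r.n then T.typeMoves r j
      else if j = r.n then some mv.2 else none := by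
  by_cases h1 : j < r.n
  · rw [dif_pos h1]
    unfold TimedGame.typeMoves
    rw [dif_pos (show j < (r.extend mv q' h).n by rw [Arena.FinRun.n_extend]; omega), dif_pos h1]
    congr 1
    show ((Fin.snoc r.m mv : Fin (r.n + 1) → T.RMove) ⟨j, by omega⟩).2 = _
    have he : (⟨j, by omega⟩ : Fin (r.n + 1)) = (⟨j, h1⟩ : Fin r.n).castSucc := rfl
    rw [he, Fin.snoc_castSucc]
  · rw [dif_neg h1]
    by_cases h2 : j = r.n
    · subst h2
      rw [if_pos rfl]
      unfold TimedGame.typeMoves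
      rw [dif_pos (show r.n < (r.extend mv q' h).n by rw [Arena.FinRun.n_extend]; omega)]
      congr 1
      show ((Fin.snoc r.m mv : Fin (r.n + 1) → T.RMove) ⟨r.n, by omega⟩).2 = _
      have he : (⟨r.n, by omega⟩ : Fin (r.n + 1)) = Fin.last r.n := rfl
      rw [he, Fin.snoc_last]
    · rw [if_neg h2]
      unfold TimedGame.typeMoves
      rw [dif_neg (show ¬ j < (r.extend mv q' h).n by rw [Arena.FinRun.n_extend]; omega)]

theorem TimedGame.sameType_extend (T : TimedGame) {r r₀ : T.PreRunF}
    (ST : T.sameType r r₀) (hn : r.n = r₀.n)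
    {mv mv₀ : T.RMove} {q' q₀' : T.Omega}
    (h : (T.preArena).Tr r.last mv q') (h₀ : (T.preArena).Tr r₀.last mv₀ q₀')
    (htail : mv.2 = mv₀.2) (hq'2 : q'.2 = q₀'.2) :
    T.sameType (r.extend mv q' h) (r₀.extend mv₀ q₀' h₀) := by
  constructor
  · funext j
    rw [T.typeConfs_extend r mv q' h j, T.typeConfs_extend r₀ mv₀ q₀' h₀ j, ST.1, hn, hq'2]
  · funext j
    rw [T.typeMoves_extend r mv q' h j, T.typeMoves_extend r₀ mv₀ q₀' h₀ j, ST.2, hn, htail]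

theorem TimedGame.sameType_last_region (T : TimedGame) {r r₀ : T.PreRunF}
    (ST : T.sameType r r₀) (hn : r.n = r₀.n) :
    (Arena.FinRun.last r).2 = (Arena.FinRun.last r₀).2 := by
  have h1 := congrFun ST.1 r.n
  unfold TimedGame.typeConfs at h1
  rw [dif_pos (Nat.lt_succ_self _), dif_pos (by omega : r.n < r₀.n + 1)] at h1
  have h2 := Option.some.inj h1
  have e1 : (⟨r.n, Nat.lt_succ_self _⟩ : Fin (r.n + 1)) = Fin.last r.n := rfl
  have e2 : (⟨r.n, by omega⟩ : Fin (r₀.n + 1)) = Fin.last r₀.n := Fin.ext (by simpa using hn)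
  rw [e1] at h2
  rw [e2] at h2
  exact h2

end AuxProof3

section AuxProof4

open TimedGame

theorem step_core (T : TimedGame) {β ν₀ νq : T.C → ℝ}
    (h₀ : ν₀ ∈ {ν' : T.C → ℝ | IsVal T.k ν' ∧ RegEq T.k β ν'})
    (hν : νq ∈ closure {ν' : T.C → ℝ | IsVal T.k ν' ∧ RegEq T.k β ν'})
    (s s₀ : T.Q) (Tt T₀ t t₀ : ℝ) (a : T.A) (b : ℕ) (cs : T.C)
    (hf : t = T.tOf s (b, cs, a)) (hf₀ : t₀ = T.tOf s₀ (b, cs, a))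
    (E : ℤ) (Y : Option T.C) (hT : Tt = (E : ℝ) - ovv νq Y) (hT₀ : T₀ = (E : ℝ) - ovv ν₀ Y)
    (IHc : ∀ c, ∃ (g : ℤ) (d : Option T.C),
      s.2 c = Tt + (g : ℝ) + ovv νq d ∧ s₀.2 c = T₀ + (g : ℝ) + ovv ν₀ d) :
    ∃ (E' : ℤ) (Y' : Option T.C),
      (Tt + t = (E' : ℝ) - ovv νq Y' ∧ T₀ + t₀ = (E' : ℝ) - ovv ν₀ Y') ∧
      ∀ c, ∃ (g' : ℤ) (d' : Option T.C),
        T.resetv (fun c' => s.2 c' + t) (T.ϱ a) c = (Tt + t) + (g' : ℝ) + ovv νq d' ∧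
        T.resetv (fun c' => s₀.2 c' + t₀) (T.ϱ a) c = (T₀ + t₀) + (g' : ℝ) + ovv ν₀ d' := by
  obtain ⟨g, d, hv, hv₀⟩ := IHc cs
  set m : ℤ := (b : ℤ) - E - g with hm
  have hmr : (m : ℝ) = (b : ℝ) - (E : ℝ) - (g : ℝ) := by rw [hm]; push_cast; ring
  have hcmp := closure_cmp h₀ hν m d Y
  have hvq : s.2 cs - (b : ℝ) = (ovv νq d - ovv νq Y) - (m : ℝ) := by
    rw [hv, hT, hmr]; ring
  have hvq₀ : s₀.2 cs - (b : ℝ) = (ovv ν₀ d - ovv ν₀ Y) - (m : ℝ) := by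
    rw [hv₀, hT₀, hmr]; ring
  have htof : T.tOf s (b, cs, a) = if s.2 cs ≤ (b : ℝ) then (b : ℝ) - s.2 cs else 0 := rfl
  have htof₀ : T.tOf s₀ (b, cs, a) = if s₀.2 cs ≤ (b : ℝ) then (b : ℝ) - s₀.2 cs else 0 := rfl
  have clocks : ∀ (E' : ℤ) (Y' : Option T.C),
      Tt + t = (E' : ℝ) - ovv νq Y' → T₀ + t₀ = (E' : ℝ) - ovv ν₀ Y' →
      ∀ c, ∃ (g' : ℤ) (d' : Option T.C),
        T.resetv (fun c' => s.2 c' + t) (T.ϱ a) c = (Tt + t) + (g' : ℝ) + ovv νq d' ∧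
        T.resetv (fun c' => s₀.2 c' + t₀) (T.ϱ a) c = (T₀ + t₀) + (g' : ℝ) + ovv ν₀ d' := by
    intro E' Y' hE hE₀ c
    by_cases hcmem : c ∈ T.ϱ a
    · refine ⟨-E', Y', ?_, ?_⟩ <;>
        simp only [TimedGame.resetv, hcmem, ite_true, if_true]
      · rw [hE]; push_cast; ring
      · rw [hE₀]; push_cast; ring
    · obtain ⟨gc, dc, hc1, hc2⟩ := IHc c
      refine ⟨gc, dc, ?_, ?_⟩ <;>
        simp only [TimedGame.resetv, hcmem, ite_false, if_false]
      · rw [hc1]; ring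
      · rw [hc2]; ring
  rcases le_or_gt (ovv ν₀ d - ovv ν₀ Y) (m : ℝ) with hle | hgt
  · have h1 : ovv νq d - ovv νq Y ≤ (m : ℝ) := by
      rcases lt_or_eq_of_le hle with hlt | heq
      · exact hcmp.1 hlt
      · exact le_of_eq (hcmp.2.1 heq)
    have ht : t = (b : ℝ) - s.2 cs := by
      rw [hf, htof, if_pos (by linarith)]
    have ht₀ : t₀ = (b : ℝ) - s₀.2 cs := by
      rw [hf₀, htof₀, if_pos (by linarith)]
    have hE : Tt + t = (((b : ℤ) - g : ℤ) : ℝ) - ovv νq d := by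
      rw [ht, hv]; push_cast; ring
    have hE₀ : T₀ + t₀ = (((b : ℤ) - g : ℤ) : ℝ) - ovv ν₀ d := by
      rw [ht₀, hv₀]; push_cast; ring
    exact ⟨(b : ℤ) - g, d, ⟨hE, hE₀⟩, clocks _ _ hE hE₀⟩
  · have h1 : (m : ℝ) ≤ ovv νq d - ovv νq Y := hcmp.2.2 hgt
    have ht : t = 0 := by
      rw [hf, htof]
      rcases le_or_gt (s.2 cs) (b : ℝ) with hh | hh
      · rw [if_pos hh]; linarith
      · rw [if_neg (not_le.2 hh)]
    have ht₀ : t₀ = 0 := by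
      rw [hf₀, htof₀, if_neg (by intro hh; linarith)]
    have hE : Tt + t = (E : ℝ) - ovv νq Y := by rw [ht, hT]; ring
    have hE₀ : T₀ + t₀ = (E : ℝ) - ovv ν₀ Y := by rw [ht₀, hT₀]; ring
    exact ⟨E, Y, ⟨hE, hE₀⟩, clocks _ _ hE hE₀⟩

theorem step_full (T : TimedGame) {β ν₀ νq : T.C → ℝ}
    (h₀ : ν₀ ∈ {ν' : T.C → ℝ | IsVal T.k ν' ∧ RegEq T.k β ν'})
    (hν : νq ∈ closure {ν' : T.C → ℝ | IsVal T.k ν' ∧ RegEq T.k β ν'})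
    {r r₀ : T.PreRunF} (hn : r.n = r₀.n) (ST : T.sameType r r₀)
    {mv mv₀ : T.RMove} {q' q₀' : T.Omega}
    (hpre : (T.preArena).Tr r.last mv q') (hpre₀ : (T.preArena).Tr r₀.last mv₀ q₀')
    (htail : mv.2 = mv₀.2) (b : ℕ) (cs : T.C)
    (hfr : mv.1 = T.tOf r.last.1 (b, cs, mv.2.2))
    (hfr₀ : mv₀.1 = T.tOf r₀.last.1 (b, cs, mv₀.2.2))
    (E : ℤ) (Y : Option T.C)
    (hT : r.time = (E : ℝ) - ovv νq Y) (hT₀ : r₀.time = (E : ℝ) - ovv ν₀ Y)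
    (IHc : ∀ c, ∃ (g : ℤ) (d : Option T.C),
      r.last.1.2 c = r.time + (g : ℝ) + ovv νq d ∧
      r₀.last.1.2 c = r₀.time + (g : ℝ) + ovv ν₀ d) :
    T.sameType (r.extend mv q' hpre) (r₀.extend mv₀ q₀' hpre₀) ∧
    (∃ (E' : ℤ) (Y' : Option T.C),
      (r.extend mv q' hpre).time = (E' : ℝ) - ovv νq Y' ∧
      (r₀.extend mv₀ q₀' hpre₀).time = (E' : ℝ) - ovv ν₀ Y') ∧
    (∀ c, ∃ (g : ℤ) (d : Option T.C),
      ((r.extend mv q' hpre).last).1.2 c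
        = (r.extend mv q' hpre).time + (g : ℝ) + ovv νq d ∧
      ((r₀.extend mv₀ q₀' hpre₀).last).1.2 c
        = (r₀.extend mv₀ q₀' hpre₀).time + (g : ℝ) + ovv ν₀ d) := by
  have hpre' : T.preTrans r.last mv q' := hpre
  have hpre₀' : T.preTrans r₀.last mv₀ q₀' := hpre₀
  have hq'2 : q'.2 = q₀'.2 := by
    have h1 : T.regAct mv.2.1 mv.2.2 q'.2 := hpre'.2.2.1
    have h2 : T.regAct mv.2.1 mv.2.2 q₀'.2 := by rw [htail]; exact hpre₀'.2.2.1
    exact regAct_region_unique T h1 h2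
  refine ⟨T.sameType_extend ST hn hpre hpre₀ htail hq'2, ?_, ?_⟩
  ·
    have htime : (r.extend mv q' hpre).time = r.time + mv.1 :=
      Arena.FinRun.time_extend r mv q' hpre
    have htime₀ : (r₀.extend mv₀ q₀' hpre₀).time = r₀.time + mv₀.1 :=
      Arena.FinRun.time_extend r₀ mv₀ q₀' hpre₀
    have hfr₀' : mv₀.1 = T.tOf r₀.last.1 (b, cs, mv.2.2) := by
      rw [hfr₀, htail]
    obtain ⟨E', Y', ⟨hE, hE₀⟩, _⟩ :=
      step_core T h₀ hν r.last.1 r₀.last.1 r.time r₀.time mv.1 mv₀.1 mv.2.2 b cs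
        hfr hfr₀' E Y hT hT₀ IHc
    exact ⟨E', Y', by rw [htime]; exact hE, by rw [htime₀]; exact hE₀⟩
  ·
    have htime : (r.extend mv q' hpre).time = r.time + mv.1 :=
      Arena.FinRun.time_extend r mv q' hpre
    have htime₀ : (r₀.extend mv₀ q₀' hpre₀).time = r₀.time + mv₀.1 :=
      Arena.FinRun.time_extend r₀ mv₀ q₀' hpre₀
    have hlastv : ((r.extend mv q' hpre).last).1.2 =
        T.resetv (fun c' => r.last.1.2 c' + mv.1) (T.ϱ mv.2.2) := by
      rw [Arena.FinRun.last_extend, hpre'.2.2.2]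
      rfl
    have hlastv₀ : ((r₀.extend mv₀ q₀' hpre₀).last).1.2 =
        T.resetv (fun c' => r₀.last.1.2 c' + mv₀.1) (T.ϱ mv.2.2) := by
      rw [Arena.FinRun.last_extend, hpre₀'.2.2.2, htail]
      rfl
    have hfr₀' : mv₀.1 = T.tOf r₀.last.1 (b, cs, mv.2.2) := by
      rw [hfr₀, htail]
    obtain ⟨E', Y', ⟨hE, hE₀⟩, hclk⟩ :=
      step_core T h₀ hν r.last.1 r₀.last.1 r.time r₀.time mv.1 mv₀.1 mv.2.2 b cs
        hfr hfr₀' E Y hT hT₀ IHc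
    intro c
    obtain ⟨g', d', hg1, hg2⟩ := hclk c
    refine ⟨g', d', ?_, ?_⟩
    · rw [htime, hlastv]; exact hg1
    · rw [htime₀, hlastv₀]; exact hg2

end AuxProof4

section AuxProof5

open TimedGame

theorem Arena.time_single {Conf Move : Type} (G : Arena Conf Move) (q0 : Conf) :
    (G.single q0).time = 0 := by
  simp [Arena.FinRun.time, Arena.single]
  exact Fin.sum_univ_zero _

theorem main_inv (T : TimedGame) (μ : T.MinPre) (hμ : T.MinTP μ) (χ : T.MaxPre)
    (hχ : T.MaxTP χ) (R : T.Region) (β : T.C → ℝ)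
    (hβ : R.2.1 = {ν' : T.C → ℝ | IsVal T.k ν' ∧ RegEq T.k β ν'})
    (ν₀ : T.C → ℝ) (h₀ : ν₀ ∈ {ν' : T.C → ℝ | IsVal T.k ν' ∧ RegEq T.k β ν'})
    (q : T.Omega) (hq : T.barS q) (hqR : q.2 = R) (n : ℕ) :
    T.sameType (Arena.play T.preArena μ χ q n)
      (Arena.play T.preArena μ χ ((R.1, ν₀), R) n) ∧
    (∃ (E : ℤ) (Y : Option T.C),
      (Arena.play T.preArena μ χ q n).time = (E : ℝ) - ovv q.1.2 Y ∧
      (Arena.play T.preArena μ χ ((R.1, ν₀), R) n).time = (E : ℝ) - ovv ν₀ Y) ∧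
    (∀ c, ∃ (g : ℤ) (d : Option T.C),
      ((Arena.play T.preArena μ χ q n).last).1.2 c
        = (Arena.play T.preArena μ χ q n).time + (g : ℝ) + ovv q.1.2 d ∧
      ((Arena.play T.preArena μ χ ((R.1, ν₀), R) n).last).1.2 c
        = (Arena.play T.preArena μ χ ((R.1, ν₀), R) n).time + (g : ℝ) + ovv ν₀ d) := by
  have hν : q.1.2 ∈ closure {ν' : T.C → ℝ | IsVal T.k ν' ∧ RegEq T.k β ν'} := by
    have h1 := hq.2
    rw [hqR, hβ] at h1
    exact h1
  induction n with
  | zero =>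
    rw [Arena.play_zero T.preArena μ χ q, Arena.play_zero T.preArena μ χ ((R.1, ν₀), R)]
    refine ⟨⟨?_, ?_⟩, ⟨0, none, ?_, ?_⟩, ?_⟩
    · funext j
      unfold TimedGame.typeConfs
      by_cases hj : j < (Arena.single T.preArena q).n + 1
      · rw [dif_pos hj, dif_pos (show j < (Arena.single T.preArena ((R.1, ν₀), R)).n + 1 from hj)]
        show some q.2 = some ((((R.1, ν₀), R) : T.Omega).2)
        rw [hqR]
      · rw [dif_neg hj, dif_neg (show ¬ j < (Arena.single T.preArena ((R.1, ν₀), R)).n + 1 from hj)]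
    · funext j
      unfold TimedGame.typeMoves
      rw [dif_neg (show ¬ j < (Arena.single T.preArena q).n from Nat.not_lt_zero j),
        dif_neg (show ¬ j < (Arena.single T.preArena ((R.1, ν₀), R)).n from Nat.not_lt_zero j)]
    · rw [Arena.time_single]; simp [ovv]
    · rw [Arena.time_single]; simp [ovv]
    · intro c
      refine ⟨0, some c, ?_, ?_⟩
      · rw [Arena.time_single]
        show q.1.2 c = 0 + ((0 : ℤ) : ℝ) + q.1.2 c
        simp
      · rw [Arena.time_single]
        show ν₀ c = 0 + ((0 : ℤ) : ℝ) + ν₀ c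
        simp
  | succ i IH =>
    obtain ⟨ST, ⟨E, Y, hT, hT₀⟩, IHc⟩ := IH
    have hrn := Arena.play_n T.preArena μ χ q i
    have hr₀n := Arena.play_n T.preArena μ χ ((R.1, ν₀), R) i
    have hn : (Arena.play T.preArena μ χ q i).n
        = (Arena.play T.preArena μ χ ((R.1, ν₀), R) i).n := by rw [hrn, hr₀n]
    have hreg := T.sameType_last_region ST hn
    have hminiff : T.preArena.IsMin (Arena.play T.preArena μ χ q i).last ↔
        T.preArena.IsMin (Arena.play T.preArena μ χ ((R.1, ν₀), R) i).last := by
      show (Arena.play T.preArena μ χ q i).last.2.1 ∈ T.LMin ↔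
        (Arena.play T.preArena μ χ ((R.1, ν₀), R) i).last.2.1 ∈ T.LMin
      rw [hreg]
    by_cases hmin : T.preArena.IsMin (Arena.play T.preArena μ χ q i).last
    · have hmin₀ : T.preArena.IsMin (Arena.play T.preArena μ χ ((R.1, ν₀), R) i).last :=
        hminiff.mp hmin
      obtain ⟨htail, b, cs, hbk, hfr, hfr₀⟩ :=
        hμ.2 (Arena.play T.preArena μ χ q i) (Arena.play T.preArena μ χ ((R.1, ν₀), R) i) ST
      have main := step_full T h₀ hν hn ST
        (Classical.choose_spec (μ.2 (Arena.play T.preArena μ χ q i) hmin))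
        (Classical.choose_spec (μ.2 (Arena.play T.preArena μ χ ((R.1, ν₀), R) i) hmin₀))
        htail b cs hfr hfr₀ E Y hT hT₀ IHc
      rw [Arena.play_succ T.preArena μ χ q i, dif_pos hmin,
        Arena.play_succ T.preArena μ χ ((R.1, ν₀), R) i, dif_pos hmin₀]
      exact main
    · have hmin₀ : ¬ T.preArena.IsMin (Arena.play T.preArena μ χ ((R.1, ν₀), R) i).last :=
        fun hh => hmin (hminiff.mpr hh)
      obtain ⟨htail, b, cs, hbk, hfr, hfr₀⟩ :=
        hχ.2 (Arena.play T.preArena μ χ q i) (Arena.play T.preArena μ χ ((R.1, ν₀), R) i) ST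
      have main := step_full T h₀ hν hn ST
        (Classical.choose_spec (χ.2 (Arena.play T.preArena μ χ q i) hmin))
        (Classical.choose_spec (χ.2 (Arena.play T.preArena μ χ ((R.1, ν₀), R) i) hmin₀))
        htail b cs hfr hfr₀ E Y hT hT₀ IHc
      rw [Arena.play_succ T.preArena μ χ q i, dif_neg hmin,
        Arena.play_succ T.preArena μ χ ((R.1, ν₀), R) i, dif_neg hmin₀]
      exact main

end AuxProof5


/-- Type-preserving boundary strategy pairs yield regionally simple total time
for finite runs: for all `μ ∈ Ξ_Min`, `χ ∈ Ξ_Max` and `n ∈ ℕ`, the function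
`q ↦ time(run_n(q, μ, χ))` is regionally simple. -/
theorem typePreserving_time_regionally_simple (T : TimedGame)
    (μ : T.MinPre) (hμ : T.MinTP μ) (χ : T.MaxPre) (hχ : T.MaxTP χ) (n : ℕ) :
    T.RegionallySimple (fun q : T.Omega =>
      Arena.FinRun.time (Arena.play T.preArena μ χ q n)) := by
  intro R
  by_cases hne : ∃ ν₀, ν₀ ∈ R.2.1
  · obtain ⟨ν₀, h₀R⟩ := hne
    obtain ⟨β, hβ⟩ := R.2.2
    have h₀ : ν₀ ∈ {ν' : T.C → ℝ | IsVal T.k ν' ∧ RegEq T.k β ν'} := by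
      rw [← hβ]; exact h₀R
    have hq₀S : T.barS ((R.1, ν₀), R) := ⟨rfl, subset_closure h₀R⟩
    obtain ⟨_, ⟨E₀, Y₀, _hB, hB⟩, _⟩ :=
      main_inv T μ hμ χ hχ R β hβ ν₀ h₀ ((R.1, ν₀), R) hq₀S rfl n
    have claim : ∀ q' : T.Omega, T.barS q' → q'.2 = R →
        (Arena.play T.preArena μ χ q' n).time = (E₀ : ℝ) - ovv q'.1.2 Y₀ := by
      intro q' hq' hq'R
      obtain ⟨_, ⟨E, Y, hTq, hTq₀⟩, _⟩ :=
        main_inv T μ hμ χ hχ R β hβ ν₀ h₀ q' hq' hq'R n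
      have hν' : q'.1.2 ∈ closure {ν' : T.C → ℝ | IsVal T.k ν' ∧ RegEq T.k β ν'} := by
        have h1 := hq'.2
        rw [hq'R, hβ] at h1
        exact h1
      have hagree : ovv ν₀ Y - ovv ν₀ Y₀ = ((E - E₀ : ℤ) : ℝ) := by
        push_cast
        linarith [hTq₀, hB]
      have htrans := (closure_cmp h₀ hν' (E - E₀) Y Y₀).2.1 hagree
      push_cast at htrans
      linarith [hTq]
    rcases Y₀ with _ | c0
    · left
      refine ⟨E₀, fun q hq => ?_⟩
      have hcl := claim q hq.1 hq.2
      simpa [ovv] using hcl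
    · right
      refine ⟨E₀, c0, fun q hq => ?_⟩
      have hcl := claim q hq.1 hq.2
      simpa [ovv] using hcl
  · left
    refine ⟨0, fun q hq => ?_⟩
    exfalso
    have hempty : R.2.1 = (∅ : Set (T.C → ℝ)) :=
      Set.eq_empty_iff_forall_notMem.mpr fun x hx => hne ⟨x, hx⟩
    have h1 := hq.1.2
    rw [hq.2, hempty, closure_empty] at h1
    exact absurd h1 (Set.notMem_empty _)
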